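/- For every positive integer n and every real x > 0, the n-th derivative of the function x ↦ e^{1/x} equals (-1)^n e^{1/x} ∑_{k=1}^{n} L(n,k) x^{-(n+k)}. -/

import Mathlib

open Finset

/-- Lah numbers: `L(n,k) = C(n-1,k-1) * n! / k!` (as a real number). -/
noncomputable def lah (n k : ℕ) : ℝ :=
  ((n - 1).choose (k - 1) : ℝ) * (Nat.factorial n) / (Nat.factorial k)

noncomputable def lahAux (n k : ℕ) : ℝ := if k = 0 then 0 else lah n k

lemma lahAux_succ (n k : ℕ) : lahAux n (k+1) = lah n (k+1) := by simp [lahAux]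

lemma lah_top_zero (n : ℕ) : lah (n+1) (n+2) = 0 := by
  simp [lah, Nat.choose_eq_zero_of_lt]

lemma choose_id (p l : ℕ) : ((p+2) * (p.choose (l+1) + p.choose l) : ℝ)
    = (p+l+3) * p.choose (l+1) + (l+2) * p.choose l := by
  rcases le_or_gt l p with h | h
  · have hh := Nat.choose_succ_right_eq p l
    have hh' : (p.choose (l+1) : ℝ) * (l+1) = p.choose l * (p - l) := by
      have := congrArg (Nat.cast (R := ℝ)) hh
      push_cast [Nat.cast_sub h] at this
      linarith [this]
    push_cast
    nlinarith [hh']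
  · have h1 : p.choose (l+1) = 0 := Nat.choose_eq_zero_of_lt (by omega)
    have h2 : p.choose l = 0 := Nat.choose_eq_zero_of_lt h
    simp [h1, h2]

lemma lah_rec (n k : ℕ) :
    lah (n+2) (k+1) = (n+2+k) * lah (n+1) (k+1) + lahAux (n+1) k := by
  cases k with
  | zero =>
    simp only [lah, lahAux, if_pos rfl, Nat.succ_sub_one, Nat.sub_self,
      Nat.choose_zero_right, Nat.factorial_one, Nat.cast_one, mul_one, add_zero,
      Nat.cast_ofNat, div_one]
    rw [Nat.factorial_succ (n+1)]
    push_cast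
    ring
  | succ l =>
    rw [lahAux_succ]
    simp only [lah, Nat.succ_sub_one]
    have hf1 : ((l+1+1).factorial : ℝ) ≠ 0 := by positivity
    have hf2 : ((l+1).factorial : ℝ) ≠ 0 := by positivity
    rw [Nat.choose_succ_succ n l, Nat.factorial_succ (n+1), Nat.factorial_succ (l+1)]
    have hc := choose_id n l
    push_cast at hc ⊢
    field_simp
    linear_combination hc

noncomputable def P (n : ℕ) (x : ℝ) : ℝ :=
  ∑ i ∈ Finset.range n, lah n (i+1) * (x⁻¹) ^ (n+i+1)

lemma hasDerivAt_P (n : ℕ) {x : ℝ} (hx : x ≠ 0) :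
    HasDerivAt (P n)
      (∑ i ∈ Finset.range n,
        lah n (i+1) * (((n+i+1 : ℕ) : ℝ) * (x⁻¹)^(n+i) * (-(x^2)⁻¹))) x := by
  unfold P
  refine HasDerivAt.fun_sum fun i _ => ?_
  have h := ((hasDerivAt_inv hx).pow (n+i+1)).const_mul (lah n (i+1))
  simpa using h

lemma hasDerivAt_exp_inv {x : ℝ} (hx : x ≠ 0) :
    HasDerivAt (fun y : ℝ => Real.exp (1/y)) (Real.exp (1/x) * (-(1/x^2))) x := by
  have h : HasDerivAt (fun y : ℝ => 1/y) (-(1/x^2)) x := by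
    simpa [one_div] using hasDerivAt_inv hx
  exact h.exp

lemma P_step (m : ℕ) {x : ℝ} (hx : x ≠ 0) :
    -(1/x^2) * P (m+1) x
      + ∑ i ∈ Finset.range (m+1),
          lah (m+1) (i+1) * (((m+1+i+1 : ℕ) : ℝ) * (x⁻¹)^(m+1+i) * (-(x^2)⁻¹))
    = - P (m+2) x := by
  unfold P
  have h1 : ∀ i ∈ Finset.range (m+2),
      lah (m+2) (i+1) * (x⁻¹)^(m+2+i+1)
        = ((m:ℝ)+2+i) * lah (m+1) (i+1) * (x⁻¹)^(m+2+i+1)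
          + lahAux (m+1) i * (x⁻¹)^(m+2+i+1) := by
    intro i _
    rw [lah_rec m i]; push_cast; ring
  rw [Finset.sum_congr rfl h1, Finset.sum_add_distrib,
    Finset.sum_range_succ (fun i => ((m:ℝ)+2+i) * lah (m+1) (i+1) * (x⁻¹)^(m+2+i+1)),
    Finset.sum_range_succ' (fun i => lahAux (m+1) i * (x⁻¹)^(m+2+i+1)) (m+1)]
  rw [lah_top_zero m]
  simp only [lahAux_succ, show lahAux (m+1) 0 = (0:ℝ) from rfl, zero_mul, mul_zero,
    add_zero, zero_add]
  rw [Finset.mul_sum, ← Finset.sum_add_distrib, ← Finset.sum_add_distrib,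
    ← Finset.sum_neg_distrib]
  refine Finset.sum_congr rfl fun i _ => ?_
  push_cast
  ring

lemma key (n : ℕ) : ∀ x : ℝ, 0 < x →
    iteratedDeriv (n+1) (fun y : ℝ => Real.exp (1/y)) x
      = (-1)^(n+1) * (Real.exp (1/x) * P (n+1) x) := by
  induction n with
  | zero =>
    intro x hx
    rw [iteratedDeriv_one, (hasDerivAt_exp_inv hx.ne').deriv]
    simp [P, lah]
  | succ m ih =>
    intro x hx
    rw [iteratedDeriv_succ]
    have hev : iteratedDeriv (m+1) (fun y : ℝ => Real.exp (1/y)) =ᶠ[nhds x]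
        fun y => (-1)^(m+1) * (Real.exp (1/y) * P (m+1) y) := by
      filter_upwards [isOpen_Ioi.mem_nhds hx] with y hy using ih y hy
    rw [hev.deriv_eq]
    have hd := ((hasDerivAt_exp_inv hx.ne').fun_mul (hasDerivAt_P (m+1) hx.ne')).const_mul
      ((-1:ℝ)^(m+1))
    rw [hd.deriv]
    have hs := P_step m hx.ne'
    calc (-1:ℝ)^(m+1) * (Real.exp (1/x) * (-(1/x^2)) * P (m+1) x
          + Real.exp (1/x) * ∑ i ∈ Finset.range (m+1),
              lah (m+1) (i+1) * (((m+1+i+1 : ℕ) : ℝ) * (x⁻¹)^(m+1+i) * (-(x^2)⁻¹)))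
        = (-1:ℝ)^(m+1) * Real.exp (1/x) * (-(1/x^2) * P (m+1) x
            + ∑ i ∈ Finset.range (m+1),
              lah (m+1) (i+1) * (((m+1+i+1 : ℕ) : ℝ) * (x⁻¹)^(m+1+i) * (-(x^2)⁻¹))) := by
          ring
      _ = (-1:ℝ)^(m+1) * Real.exp (1/x) * (- P (m+2) x) := by rw [hs]
      _ = (-1)^(m+1+1) * (Real.exp (1/x) * P (m+1+1) x) := by ring

theorem iteratedDeriv_exp_inv_eq_lah_sum (n : ℕ) (hn : 1 ≤ n) (x : ℝ) (hx : 0 < x) :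
    iteratedDeriv n (fun y : ℝ => Real.exp (1 / y)) x
      = (-1 : ℝ) ^ n * Real.exp (1 / x) *
        ∑ k ∈ Finset.Icc 1 n, lah n k / x ^ (n + k) := by
  obtain ⟨m, rfl⟩ : ∃ m, n = m + 1 := ⟨n - 1, by omega⟩
  rw [key m x hx]
  rw [← Finset.Ico_add_one_right_eq_Icc, Finset.sum_Ico_eq_sum_range]
  have : ∀ i ∈ Finset.range (m+1),
      lah (m+1) (1+i) / x ^ (m+1+(1+i)) = lah (m+1) (i+1) * (x⁻¹) ^ (m+1+i+1) := by
    intro i _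
    rw [add_comm 1 i, div_eq_mul_inv, ← inv_pow,
      show m+1+(i+1) = m+1+i+1 from by omega]
  simp only [Nat.add_sub_cancel]
  rw [Finset.sum_congr rfl this]
  unfold P
  ring
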